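/- Local dimension is unbounded on the class of finite posets of height 2: for every integer d ≥ 1 there exists a finite poset P in which every chain has at most 2 elements and whose local dimension is at least d. -/

import Mathlib

/-- A partial linear extension (ple) of a poset `α`: a set `dom` together with a
linear order `rel` on `dom` extending the restriction of the partial order to `dom`. -/
structure PLE (α : Type*) [PartialOrder α] where
  dom : Set α
  rel : α → α → Prop
  refl : ∀ x ∈ dom, rel x x
  antisymm : ∀ x ∈ dom, ∀ y ∈ dom, rel x y → rel y x → x = y
  trans : ∀ x ∈ dom, ∀ y ∈ dom, ∀ z ∈ dom, rel x y → rel y z → rel x z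
  total : ∀ x ∈ dom, ∀ y ∈ dom, rel x y ∨ rel y x
  extends_le : ∀ x ∈ dom, ∀ y ∈ dom, x ≤ y → rel x y

/-- `μ(u, 𝓛)`: the number of members of the family `𝓛` whose domain contains `u`. -/
noncomputable def mu {α : Type*} [PartialOrder α] {m : ℕ} (L : Fin m → PLE α) (u : α) : ℕ :=
  Set.ncard {i : Fin m | u ∈ (L i).dom}

/-- A family of ple's is a local realizer when every strict comparability is witnessed
and every incomparable pair is reversed by some member. -/
def IsLocalRealizer {α : Type*} [PartialOrder α] {m : ℕ} (L : Fin m → PLE α) : Prop :=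
  (∀ x y : α, x < y → ∃ i, x ∈ (L i).dom ∧ y ∈ (L i).dom ∧ (L i).rel x y) ∧
  (∀ x y : α, ¬ x ≤ y → ¬ y ≤ x → ∃ i, x ∈ (L i).dom ∧ y ∈ (L i).dom ∧ (L i).rel y x)

/-- The local dimension: the least positive `d` admitting a local realizer `𝓛`
with `μ(u,𝓛) ≤ d` for every `u`. -/
noncomputable def localDim (α : Type*) [PartialOrder α] : ℕ :=
  sInf {d : ℕ | 0 < d ∧ ∃ m : ℕ, ∃ L : Fin m → PLE α,
    IsLocalRealizer L ∧ ∀ u : α, mu L u ≤ d}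

/-! ### auxiliary list lemmas -/

lemma blockAppend_inj {γ : Type*} : ∀ (l l' : List γ) (u u' : List (Option γ)),
    l.map some ++ (none :: u) = l'.map some ++ (none :: u') → l = l' ∧ u = u' := by
  intro l
  induction l with
  | nil =>
    intro l' u u' h
    cases l' with
    | nil => simpa using h
    | cons a t => simp at h
  | cons a t ih =>
    intro l' u u' h
    cases l' with
    | nil => simp at h
    | cons a' t' =>
      simp only [List.map_cons, List.cons_append, List.cons.injEq, Option.some.injEq] at h
      obtain ⟨rfl, h2⟩ := h
      obtain ⟨rfl, rfl⟩ := ih t' u u' h2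
      exact ⟨rfl, rfl⟩

lemma joinBlocks_inj {γ : Type*} : ∀ (ls ls' : List (List γ)),
    (ls.map (fun l => l.map some ++ [none])).flatten =
      (ls'.map (fun l => l.map some ++ [none])).flatten → ls = ls' := by
  intro ls
  induction ls with
  | nil =>
    intro ls' h
    cases ls' with
    | nil => rfl
    | cons a t =>
      exfalso
      simp only [List.map_nil, List.flatten_nil, List.map_cons, List.flatten_cons] at h
      have : (none : Option γ) ∈ (a.map some ++ [none]) ++ (t.map (fun l => l.map some ++ [none])).flatten := by
        simp
      rw [← h] at this; simp at this
  | cons a t ih =>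
    intro ls' h
    cases ls' with
    | nil =>
      exfalso
      simp only [List.map_cons, List.flatten_cons, List.map_nil, List.flatten_nil] at h
      have : (none : Option γ) ∈ (a.map some ++ [none]) ++ (t.map (fun l => l.map some ++ [none])).flatten := by
        simp
      rw [h] at this; simp at this
    | cons a' t' =>
      simp only [List.map_cons, List.flatten_cons, List.append_assoc, List.singleton_append] at h
      obtain ⟨rfl, h2⟩ := blockAppend_inj a a' _ _ h
      rw [ih t' h2]

lemma get?_ext_of_le {γ : Type*} {K : ℕ} (l l' : List γ) (hl : l.length ≤ K)
    (hl' : l'.length ≤ K) (h : ∀ j : Fin K, l[(j : ℕ)]? = l'[(j : ℕ)]?) : l = l' := by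
  apply List.ext_getElem?
  intro j
  by_cases hj : j < K
  · exact h ⟨j, hj⟩
  · push_neg at hj
    rw [List.getElem?_eq_none (le_trans hl hj), List.getElem?_eq_none (le_trans hl' hj)]

lemma length_le_sum_card {γ : Type*} : ∀ (l : List (Finset γ)),
    (∀ t ∈ l, t.Nonempty) → l.length ≤ (l.map Finset.card).sum := by
  intro l
  induction l with
  | nil => simp
  | cons a t ih =>
    intro h
    simp only [List.length_cons, List.map_cons, List.sum_cons]
    have h1 : 1 ≤ a.card := Finset.card_pos.2 (h a (by simp))
    have h2 := ih (fun x hx => h x (by simp [hx]))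
    omega

lemma sum_map_add_one {γ : Type*} (f : γ → ℕ) : ∀ l : List γ,
    (l.map (fun t => f t + 1)).sum = (l.map f).sum + l.length := by
  intro l
  induction l with
  | nil => simp
  | cons a t ih => simp [ih]; omega

/-! ### ranks and traces of partial linear extensions -/

open scoped Classical

noncomputable section

variable {β : Type*} [PartialOrder β] [Fintype β]

/-- domain as a finset -/
def PLE.domF (P : PLE β) : Finset β := (Set.toFinite P.dom).toFinset

lemma PLE.mem_domF {P : PLE β} {x : β} : x ∈ P.domF ↔ x ∈ P.dom :=
  Set.Finite.mem_toFinset _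

/-- number of strict predecessors in dom -/
def PLE.rank (P : PLE β) (x : β) : Fin (Fintype.card β) :=
  ⟨(P.domF.filter (fun y => P.rel y x ∧ y ≠ x)).card, by
    have hx : (P.domF.filter (fun y => P.rel y x ∧ y ≠ x)) ⊆ Finset.univ.erase x := by
      intro y hy
      simp only [Finset.mem_filter] at hy
      exact Finset.mem_erase.2 ⟨hy.2.2, Finset.mem_univ _⟩
    calc (P.domF.filter (fun y => P.rel y x ∧ y ≠ x)).card
        ≤ (Finset.univ.erase x).card := Finset.card_le_card hx
      _ < Fintype.card β := by
          rw [Finset.card_erase_of_mem (Finset.mem_univ x), Finset.card_univ]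
          have : 0 < Fintype.card β := Fintype.card_pos_iff.2 ⟨x⟩
          omega⟩

lemma PLE.rank_lt_rank (P : PLE β) {x y : β} (hx : x ∈ P.dom) (hy : y ∈ P.dom)
    (hxy : P.rel x y) (hne : x ≠ y) : P.rank x < P.rank y := by
  have hsub : (P.domF.filter (fun z => P.rel z x ∧ z ≠ x)) ⊆
      (P.domF.filter (fun z => P.rel z y ∧ z ≠ y)) := by
    intro z hz
    simp only [Finset.mem_filter, PLE.mem_domF] at hz ⊢
    refine ⟨hz.1, P.trans z hz.1 x hx y hy hz.2.1 hxy, ?_⟩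
    intro hzy
    subst hzy
    exact hne (P.antisymm _ hx _ hy hxy hz.2.1)
  have hmem : x ∈ (P.domF.filter (fun z => P.rel z y ∧ z ≠ y)) := by
    simp only [Finset.mem_filter, PLE.mem_domF]
    exact ⟨hx, hxy, hne⟩
  have hnotmem : x ∉ (P.domF.filter (fun z => P.rel z x ∧ z ≠ x)) := by
    simp only [Finset.mem_filter]
    tauto
  have := Finset.card_lt_card (Finset.ssubset_iff_of_subset hsub |>.2 ⟨x, hmem, hnotmem⟩)
  exact this

lemma PLE.rel_iff_rank_le (P : PLE β) {x y : β} (hx : x ∈ P.dom) (hy : y ∈ P.dom) :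
    P.rel x y ↔ P.rank x ≤ P.rank y := by
  constructor
  · intro h
    rcases eq_or_ne x y with rfl | hne
    · exact le_refl _
    · exact le_of_lt (P.rank_lt_rank hx hy h hne)
  · intro h
    by_contra hrel
    have hyx : P.rel y x := (P.total x hx y hy).resolve_left hrel
    have hne : y ≠ x := by rintro rfl; exact hrel (P.refl _ hx)
    exact absurd h (not_le.2 (P.rank_lt_rank hy hx hyx hne))

/-- the trace: elements paired with their ranks -/
def PLE.trace (P : PLE β) : Finset (β × Fin (Fintype.card β)) :=
  P.domF.image (fun x => (x, P.rank x))

lemma PLE.mem_trace {P : PLE β} {x : β} {p : Fin (Fintype.card β)} :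
    (x, p) ∈ P.trace ↔ x ∈ P.dom ∧ p = P.rank x := by
  simp only [PLE.trace, Finset.mem_image]
  constructor
  · rintro ⟨a, ha, h⟩
    rw [Prod.mk.injEq] at h
    obtain ⟨rfl, rfl⟩ := h
    exact ⟨PLE.mem_domF.1 ha, rfl⟩
  · rintro ⟨hx, rfl⟩
    exact ⟨x, PLE.mem_domF.2 hx, rfl⟩

lemma PLE.trace_card (P : PLE β) : P.trace.card = P.domF.card :=
  Finset.card_image_of_injective _ (fun _ _ h => congrArg Prod.fst h)

lemma PLE.trace_nonempty {P : PLE β} (h : P.dom.Nonempty) : P.trace.Nonempty := by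
  obtain ⟨x, hx⟩ := h
  exact ⟨(x, P.rank x), PLE.mem_trace.2 ⟨hx, rfl⟩⟩

/-! ### encoding a family of ples -/

/-- pairs-with-a-common-witness relation read off a list of traces -/
def Trd {β : Type*} {N : ℕ} (E : List (Finset (β × Fin N))) (x y : β) : Prop :=
  ∃ t ∈ E, ∃ p q : Fin N, (x, p) ∈ t ∧ (y, q) ∈ t ∧ p ≤ q

variable {m : ℕ} (L : Fin m → PLE β)

def idxs : List (Fin m) := (List.finRange m).filter (fun i => decide ((L i).dom.Nonempty))

def encL : List (Finset (β × Fin (Fintype.card β))) := (idxs L).map (fun i => (L i).trace)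

lemma mem_idxs {i : Fin m} : i ∈ idxs L ↔ (L i).dom.Nonempty := by
  simp [idxs, List.mem_filter]

lemma trd_encL_iff (x y : β) :
    Trd (encL L) x y ↔ ∃ i, x ∈ (L i).dom ∧ y ∈ (L i).dom ∧ (L i).rel x y := by
  constructor
  · rintro ⟨t, ht, p, q, hxp, hyq, hpq⟩
    simp only [encL, List.mem_map] at ht
    obtain ⟨i, hi, rfl⟩ := ht
    obtain ⟨hx, rfl⟩ := PLE.mem_trace.1 hxp
    obtain ⟨hy, rfl⟩ := PLE.mem_trace.1 hyq
    exact ⟨i, hx, hy, ((L i).rel_iff_rank_le hx hy).2 hpq⟩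
  · rintro ⟨i, hx, hy, hrel⟩
    refine ⟨(L i).trace, ?_, (L i).rank x, (L i).rank y, ?_, ?_, ?_⟩
    · simp only [encL, List.mem_map]
      exact ⟨i, (mem_idxs L).2 ⟨x, hx⟩, rfl⟩
    · exact PLE.mem_trace.2 ⟨hx, rfl⟩
    · exact PLE.mem_trace.2 ⟨hy, rfl⟩
    · exact ((L i).rel_iff_rank_le hx hy).1 hrel

/-- total size bound from mu -/
lemma encL_sum_card_le {d : ℕ} (hmu : ∀ u : β, mu L u ≤ d) :
    ((encL L).map Finset.card).sum ≤ Fintype.card β * d := by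
  have h1 : ((encL L).map Finset.card).sum = ((idxs L).map (fun i => (L i).domF.card)).sum := by
    simp [encL, List.map_map, Function.comp_def, PLE.trace_card]
  rw [h1]
  have hnd : (idxs L).Nodup := List.Nodup.filter _ (List.nodup_finRange m)
  have h2 : ((idxs L).map (fun i => (L i).domF.card)).sum
      = ∑ i ∈ (idxs L).toFinset, (L i).domF.card := by
    rw [List.sum_toFinset _ hnd]
  have h3 : ∑ i ∈ (idxs L).toFinset, (L i).domF.card ≤ ∑ i : Fin m, (L i).domF.card := by
    apply Finset.sum_le_sum_of_subset (Finset.subset_univ _)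
  have h4 : ∑ i : Fin m, (L i).domF.card = ∑ x : β, (Finset.univ.filter (fun i : Fin m => x ∈ (L i).dom)).card := by
    have : ∀ i : Fin m, (L i).domF.card = ∑ x : β, (if x ∈ (L i).dom then 1 else 0) := by
      intro i
      have hd : (L i).domF = Finset.univ.filter (fun x => x ∈ (L i).dom) := by
        ext x; simp [PLE.mem_domF]
      rw [hd, Finset.card_filter]
    simp_rw [this]
    rw [Finset.sum_comm]
    congr 1
    ext x
    rw [Finset.card_filter]
  have h5 : ∀ x : β, (Finset.univ.filter (fun i : Fin m => x ∈ (L i).dom)).card = mu L x := by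
    intro x
    rw [mu, Set.ncard_eq_toFinset_card']
    congr 1
    ext i
    simp
  calc ((idxs L).map (fun i => (L i).domF.card)).sum
      = ∑ i ∈ (idxs L).toFinset, (L i).domF.card := h2
    _ ≤ ∑ i : Fin m, (L i).domF.card := h3
    _ = ∑ x : β, (Finset.univ.filter (fun i : Fin m => x ∈ (L i).dom)).card := h4
    _ = ∑ x : β, mu L x := by simp_rw [h5]
    _ ≤ ∑ _x : β, d := Finset.sum_le_sum (fun x _ => hmu x)
    _ = Fintype.card β * d := by simp [Finset.sum_const, Finset.card_univ, mul_comm]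

lemma encL_nonempty_mem : ∀ t ∈ encL L, t.Nonempty := by
  intro t ht
  simp only [encL, List.mem_map] at ht
  obtain ⟨i, hi, rfl⟩ := ht
  exact PLE.trace_nonempty ((mem_idxs L).1 hi)

end

/-! ### flattened encodings -/

noncomputable section

/-- sort a finset of a fintype into a canonical list -/
def slF {V : Type*} [Fintype V] [DecidableEq V] (t : Finset V) : List (Fin (Fintype.card V)) :=
  (t.image (Fintype.equivFin V)).sort (· ≤ ·)

lemma slF_inj {V : Type*} [Fintype V] [DecidableEq V] {a b : Finset V}
    (h : slF a = slF b) : a = b := by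
  have h2 : (slF a).toFinset = (slF b).toFinset := by rw [h]
  simp only [slF, Finset.sort_toFinset] at h2
  exact Finset.image_injective (Fintype.equivFin V).injective h2

lemma slF_length {V : Type*} [Fintype V] [DecidableEq V] (t : Finset V) :
    (slF t).length = t.card := by
  rw [slF, Finset.length_sort, Finset.card_image_of_injective _ (Fintype.equivFin V).injective]

open scoped Classical in
/-- the full flattened encoding of a family of ples -/
def bigEnc {β : Type*} [PartialOrder β] [Fintype β] {m : ℕ} (L : Fin m → PLE β) :
    List (Option (Fin (Fintype.card (β × Fin (Fintype.card β))))) :=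
  ((encL L).map (fun t => (slF t).map some ++ [none])).flatten

open scoped Classical in
lemma bigEnc_length {β : Type*} [PartialOrder β] [Fintype β] {m : ℕ} (L : Fin m → PLE β)
    {d : ℕ} (hmu : ∀ u : β, mu L u ≤ d) :
    (bigEnc L).length ≤ 2 * (Fintype.card β * d) := by
  rw [bigEnc, List.length_flatten, List.map_map]
  have h1 : ((encL L).map (List.length ∘ fun t => (slF t).map some ++ [none]))
      = (encL L).map (fun t => t.card + 1) := by
    apply List.map_congr_left
    intro t _
    simp [slF_length]
  rw [h1, sum_map_add_one]
  have h2 := encL_sum_card_le L hmu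
  have h3 := length_le_sum_card _ (encL_nonempty_mem L)
  omega

open scoped Classical in
lemma bigEnc_mem_iff {β : Type*} [Fintype β] {inst inst' : PartialOrder β}
    {m m' : ℕ} (L : Fin m → @PLE β inst) (L' : Fin m' → @PLE β inst')
    (h : @bigEnc β inst _ m L = @bigEnc β inst' _ m' L') :
    ∀ t, t ∈ @encL β inst _ m L ↔ t ∈ @encL β inst' _ m' L' := by
  unfold bigEnc at h
  have h2 : (@encL β inst _ m L).map slF = (@encL β inst' _ m' L').map slF := by
    apply joinBlocks_inj
    simpa only [List.map_map, Function.comp_def] using h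
  intro t
  constructor
  · intro ht
    have : slF t ∈ (@encL β inst' _ m' L').map slF := by
      rw [← h2]; exact List.mem_map_of_mem ht
    obtain ⟨t', ht', hst⟩ := List.mem_map.1 this
    rwa [← slF_inj hst]
  · intro ht
    have : slF t ∈ (@encL β inst _ m L).map slF := by
      rw [h2]; exact List.mem_map_of_mem ht
    obtain ⟨t', ht', hst⟩ := List.mem_map.1 this
    rwa [← slF_inj hst]

end
noncomputable section

/-- the bipartite partial order determined by a boolean matrix -/
def bpo {n : ℕ} (B : Fin n → Fin n → Bool) : PartialOrder (Fin n ⊕ Fin n) where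
  le x y := x = y ∨ ∃ i j, x = Sum.inl i ∧ y = Sum.inr j ∧ B i j = true
  lt x y := (x = y ∨ ∃ i j, x = Sum.inl i ∧ y = Sum.inr j ∧ B i j = true) ∧
    ¬ (y = x ∨ ∃ i j, y = Sum.inl i ∧ x = Sum.inr j ∧ B i j = true)
  lt_iff_le_not_ge x y := Iff.rfl
  le_refl x := Or.inl rfl
  le_trans x y z hxy hyz := by
    rcases hxy with rfl | ⟨i, j, rfl, rfl, h⟩
    · exact hyz
    · rcases hyz with rfl | ⟨i', j', h1, h2, h3⟩
      · exact Or.inr ⟨i, j, rfl, rfl, h⟩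
      · exact absurd h1 (by simp)
  le_antisymm x y hxy hyx := by
    rcases hxy with rfl | ⟨i, j, rfl, rfl, h⟩
    · rfl
    · rcases hyx with h' | ⟨i', j', h1, h2, h3⟩
      · exact h'.symm
      · exact absurd h1 (by simp)

lemma bpo_le_iff {n : ℕ} (B : Fin n → Fin n → Bool) (x y : Fin n ⊕ Fin n) :
    (bpo B).le x y ↔ x = y ∨ ∃ i j, x = Sum.inl i ∧ y = Sum.inr j ∧ B i j = true := Iff.rfl

lemma bpo_lt_iff {n : ℕ} (B : Fin n → Fin n → Bool) (x y : Fin n ⊕ Fin n) :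
    (bpo B).lt x y ↔ ∃ i j, x = Sum.inl i ∧ y = Sum.inr j ∧ B i j = true := by
  rw [(bpo B).lt_iff_le_not_ge]
  constructor
  · rintro ⟨hle, hnle⟩
    rcases hle with rfl | h
    · exact absurd ((bpo B).le_refl x) hnle
    · exact h
  · rintro ⟨i, j, rfl, rfl, h⟩
    refine ⟨Or.inr ⟨i, j, rfl, rfl, h⟩, ?_⟩
    rintro (h' | ⟨i', j', h1, h2, h3⟩)
    · exact absurd h' (by simp)
    · exact absurd h1 (by simp)

lemma bpo_height' {n : ℕ} (B : Fin n → Fin n → Bool) :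
    ∀ x y z : Fin n ⊕ Fin n, (bpo B).lt x y → (bpo B).lt y z → False := by
  intro x y z hxy hyz
  rw [bpo_lt_iff] at hxy hyz
  obtain ⟨i, j, rfl, rfl, -⟩ := hxy
  obtain ⟨i', j', h1, -, -⟩ := hyz
  exact absurd h1 (by simp)

end
noncomputable section

variable {β : Type*} [PartialOrder β]

/-- the two element ple putting `x` before `y` unless `y < x` -/
def pairPLE (x y : β) : PLE β where
  dom := {x, y}
  rel a b := (a = b ∧ (a = x ∨ a = y)) ∨ (¬ y < x ∧ a = x ∧ b = y) ∨ (y < x ∧ a = y ∧ b = x)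
  refl a ha := Or.inl ⟨rfl, ha⟩
  antisymm a ha b hb hab hba := by
    rcases hab with ⟨h, -⟩ | ⟨h1, ha1, hb1⟩ | ⟨h1, ha1, hb1⟩
    · exact h
    · rcases hba with ⟨h, -⟩ | ⟨h2, hb2, ha2⟩ | ⟨h2, hb2, ha2⟩ <;> grind
    · rcases hba with ⟨h, -⟩ | ⟨h2, hb2, ha2⟩ | ⟨h2, hb2, ha2⟩ <;> grind
  trans a ha b hb c hc hab hbc := by
    rcases hab with ⟨rfl, -⟩ | ⟨h1, ha1, hb1⟩ | ⟨h1, ha1, hb1⟩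
    · exact hbc
    · rcases hbc with ⟨heq, -⟩ | ⟨h2, hb2, hc2⟩ | ⟨h2, hb2, hc2⟩
      · exact Or.inr (Or.inl ⟨h1, ha1, heq ▸ hb1⟩)
      · exact Or.inr (Or.inl ⟨h1, ha1, hc2⟩)
      · exact absurd h2 h1
    · rcases hbc with ⟨heq, -⟩ | ⟨h2, hb2, hc2⟩ | ⟨h2, hb2, hc2⟩
      · exact Or.inr (Or.inr ⟨h1, ha1, heq ▸ hb1⟩)
      · exact absurd h1 h2
      · exact Or.inr (Or.inr ⟨h1, ha1, hc2⟩)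
  total a ha b hb := by
    rcases ha with rfl | rfl <;> rcases hb with rfl | rfl
    · exact Or.inl (Or.inl ⟨rfl, Or.inl rfl⟩)
    · by_cases h : b < a
      · exact Or.inr (Or.inr (Or.inr ⟨h, rfl, rfl⟩))
      · exact Or.inl (Or.inr (Or.inl ⟨h, rfl, rfl⟩))
    · by_cases h : a < b
      · exact Or.inl (Or.inr (Or.inr ⟨h, rfl, rfl⟩))
      · exact Or.inr (Or.inr (Or.inl ⟨h, rfl, rfl⟩))
    · exact Or.inl (Or.inl ⟨rfl, Or.inr rfl⟩)
  extends_le a ha b hb hab := by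
    rcases ha with rfl | rfl <;> rcases hb with rfl | rfl
    · exact Or.inl ⟨rfl, Or.inl rfl⟩
    · refine Or.inr (Or.inl ⟨?_, rfl, rfl⟩)
      intro h
      exact absurd (lt_of_lt_of_le h hab) (lt_irrefl _)
    · rcases eq_or_lt_of_le hab with rfl | h
      · exact Or.inl ⟨rfl, Or.inl rfl⟩
      · exact Or.inr (Or.inr ⟨h, rfl, rfl⟩)
    · exact Or.inl ⟨rfl, Or.inr rfl⟩

lemma localDim_set_nonempty (β : Type*) [PartialOrder β] [Fintype β] :
    {d : ℕ | 0 < d ∧ ∃ m : ℕ, ∃ L : Fin m → PLE β,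
      IsLocalRealizer L ∧ ∀ u : β, mu L u ≤ d}.Nonempty := by
  classical
  set m := Fintype.card (β × β) with hm
  let e : (β × β) ≃ Fin m := Fintype.equivFin (β × β)
  refine ⟨m + 1, Nat.succ_pos m, m, fun k => pairPLE (e.symm k).1 (e.symm k).2, ⟨?_, ?_⟩, ?_⟩
  · intro x y hxy
    refine ⟨e (x, y), ?_, ?_, ?_⟩ <;> simp only [Equiv.symm_apply_apply]
    · exact Set.mem_insert _ _
    · exact Set.mem_insert_of_mem _ rfl
    · exact Or.inr (Or.inl ⟨fun h => absurd (lt_trans h hxy) (lt_irrefl _), rfl, rfl⟩)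
  · intro x y hxy hyx
    refine ⟨e (y, x), ?_, ?_, ?_⟩ <;> simp only [Equiv.symm_apply_apply]
    · exact Set.mem_insert_of_mem _ rfl
    · exact Set.mem_insert _ _
    · exact Or.inr (Or.inl ⟨fun h => hxy (le_of_lt h), rfl, rfl⟩)
  · intro u
    have : mu (fun k => pairPLE (e.symm k).1 (e.symm k).2) u ≤ m := by
      rw [mu]
      calc Set.ncard {i : Fin m | u ∈ (pairPLE (e.symm i).1 (e.symm i).2).dom}
          ≤ Set.ncard (Set.univ : Set (Fin m)) :=
            Set.ncard_le_ncard (Set.subset_univ _) Set.finite_univ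
        _ = m := by rw [Set.ncard_univ]; simp
    omega

end

/-! ### recovery of the boolean matrix from a local realizer -/

open scoped Classical in
lemma trd_bpo {n : ℕ} (B : Fin n → Fin n → Bool) {m : ℕ}
    (L : Fin m → @PLE (Fin n ⊕ Fin n) (bpo B))
    (hL : @IsLocalRealizer _ (bpo B) m L) (i j : Fin n) :
    B i j = true ↔
      ¬ Trd (@encL (Fin n ⊕ Fin n) (bpo B) _ m L) (Sum.inr j) (Sum.inl i) := by
  letI := bpo B
  constructor
  · intro hB htrd
    rw [trd_encL_iff] at htrd
    obtain ⟨k, hj, hi, hrel⟩ := htrd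
    have hle : (bpo B).le (Sum.inl i) (Sum.inr j) := Or.inr ⟨i, j, rfl, rfl, hB⟩
    have h1 : (L k).rel (Sum.inl i) (Sum.inr j) := (L k).extends_le _ hi _ hj hle
    have h2 := (L k).antisymm _ hi _ hj h1 hrel
    simp at h2
  · intro hntrd
    by_contra hBf
    have h1 : ¬ (bpo B).le (Sum.inl i) (Sum.inr j) := by
      rintro (heq | ⟨i', j', e1, e2, hb⟩)
      · simp at heq
      · rw [Sum.inl.injEq] at e1
        rw [Sum.inr.injEq] at e2
        subst e1; subst e2
        exact hBf hb
    have h2 : ¬ (bpo B).le (Sum.inr j) (Sum.inl i) := by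
      rintro (heq | ⟨i', j', e1, e2, hb⟩)
      · simp at heq
      · simp at e1
    obtain ⟨k, hx, hy, hr⟩ := hL.2 (Sum.inl i) (Sum.inr j) h1 h2
    exact hntrd ((trd_encL_iff L (Sum.inr j) (Sum.inl i)).2 ⟨k, hy, hx, hr⟩)

/-! ### the key counting lemma -/

open scoped Classical in
lemma key_counting (n d : ℕ) (hn : 0 < n)
    (hcount : (Fintype.card ((Fin n ⊕ Fin n) × Fin (Fintype.card (Fin n ⊕ Fin n))) + 2)
        ^ (2 * (Fintype.card (Fin n ⊕ Fin n) * d) + 1) < 2 ^ (n * n)) :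
    ∃ B : Fin n → Fin n → Bool, d ≤ @localDim _ (bpo B) := by
  by_contra hc
  push_neg at hc
  have hrealizers : ∀ B : Fin n → Fin n → Bool, ∃ m : ℕ, ∃ L : Fin m → @PLE (Fin n ⊕ Fin n) (bpo B),
      @IsLocalRealizer (Fin n ⊕ Fin n) (bpo B) m L ∧ ∀ u : (Fin n ⊕ Fin n), @mu (Fin n ⊕ Fin n) (bpo B) m L u ≤ d := by
    intro B
    letI := bpo B
    have hne := localDim_set_nonempty (Fin n ⊕ Fin n)
    have hmem := Nat.sInf_mem hne
    obtain ⟨hpos, m, L, hreal, hmu⟩ := hmem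
    have hlt : localDim (Fin n ⊕ Fin n) < d := hc B
    exact ⟨m, L, hreal, fun u => le_trans (hmu u) (le_of_lt (by
      rw [localDim] at hlt; exact hlt))⟩
  choose mf Lf hre hmu using hrealizers
  -- the encoding map
  let Φ : (Fin n → Fin n → Bool) → (Fin (2 * (Fintype.card (Fin n ⊕ Fin n) * d) + 1) → Option (Option (Fin (Fintype.card ((Fin n ⊕ Fin n) × Fin (Fintype.card (Fin n ⊕ Fin n))))))) :=
    fun B j => (@bigEnc (Fin n ⊕ Fin n) (bpo B) _ (mf B) (Lf B))[(j : ℕ)]?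
  have hlen : ∀ B, (@bigEnc (Fin n ⊕ Fin n) (bpo B) _ (mf B) (Lf B)).length ≤ 2 * (Fintype.card (Fin n ⊕ Fin n) * d) + 1 := by
    intro B
    have := @bigEnc_length (Fin n ⊕ Fin n) (bpo B) _ (mf B) (Lf B) d (hmu B)
    omega
  have hinj : Function.Injective Φ := by
    intro B B' hΦ
    have hbig : @bigEnc (Fin n ⊕ Fin n) (bpo B) _ (mf B) (Lf B) = @bigEnc (Fin n ⊕ Fin n) (bpo B') _ (mf B') (Lf B') := by
      apply get?_ext_of_le _ _ (hlen B) (hlen B')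
      intro jj
      exact congrFun hΦ jj
    have hmemiff := bigEnc_mem_iff (Lf B) (Lf B') hbig
    have htrd : ∀ x y : (Fin n ⊕ Fin n), Trd (@encL (Fin n ⊕ Fin n) (bpo B) _ (mf B) (Lf B)) x y ↔
        Trd (@encL (Fin n ⊕ Fin n) (bpo B') _ (mf B') (Lf B')) x y := by
      intro x y
      constructor
      · rintro ⟨t, ht, rest⟩
        exact ⟨t, (hmemiff t).1 ht, rest⟩
      · rintro ⟨t, ht, rest⟩
        exact ⟨t, (hmemiff t).2 ht, rest⟩
    funext i j
    have h1 := trd_bpo B (Lf B) (hre B) i j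
    have h2 := trd_bpo B' (Lf B') (hre B') i j
    rw [htrd (Sum.inr j) (Sum.inl i)] at h1
    rw [← h2] at h1
    cases hb : B i j <;> cases hb' : B' i j
    · rfl
    · rw [hb, hb'] at h1; simp at h1
    · rw [hb, hb'] at h1; simp at h1
    · rfl
  have hcard := @Fintype.card_le_of_injective _ _ inferInstance inferInstance Φ hinj
  have hdom : Fintype.card (Fin n → Fin n → Bool) = 2 ^ (n * n) := by
    rw [Fintype.card_fun, Fintype.card_fun]
    simp [pow_mul]
  have hcod : Fintype.card (Fin (2 * (Fintype.card (Fin n ⊕ Fin n) * d) + 1) → Option (Option (Fin (Fintype.card ((Fin n ⊕ Fin n) × Fin (Fintype.card (Fin n ⊕ Fin n))))))) = (Fintype.card ((Fin n ⊕ Fin n) × Fin (Fintype.card (Fin n ⊕ Fin n))) + 2) ^ (2 * (Fintype.card (Fin n ⊕ Fin n) * d) + 1) := by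
    rw [Fintype.card_fun]
    simp
  rw [hdom, hcod] at hcard
  exact absurd hcard (not_le.2 hcount)

lemma numeric (d : ℕ) (hd : 1 ≤ d) :
    ((2^(10*d) + 2^(10*d)) * (2^(10*d) + 2^(10*d)) + 2) ^ (2*((2^(10*d) + 2^(10*d))*d)+1)
      < 2 ^ (2^(10*d) * 2^(10*d)) := by
  obtain ⟨n, hn⟩ : ∃ n, n = 2^(10*d) := ⟨_, rfl⟩
  rw [← hn]
  have hn1 : 1 ≤ n := by rw [hn]; exact Nat.one_le_two_pow
  have hd2 : d < 2 ^ d := Nat.lt_two_pow_self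
  have hdd : d * d < 2 ^ (2 * d) := by
    calc d * d < 2 ^ d * 2 ^ d := Nat.mul_lt_mul'' hd2 hd2
      _ = 2 ^ (2 * d) := by rw [← pow_add]; ring_nf
  have hnd : 1 ≤ n * d := Nat.one_le_iff_ne_zero.2 (by positivity)
  -- base bound
  have hbase : (n + n) * (n + n) + 2 ≤ 2 ^ (20 * d + 3) := by
    have h1 : (n + n) * (n + n) + 2 = 4 * (n * n) + 2 := by ring
    have h2 : 1 ≤ n * n := Nat.one_le_iff_ne_zero.2 (by positivity)
    have h3 : 4 * (n * n) + 2 ≤ 8 * (n * n) := by omega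
    have h4 : 8 * (n * n) = 2 ^ (20 * d + 3) := by
      rw [hn, ← pow_add]
      norm_num
      ring_nf
    omega
  -- exponent bound
  have hexp : (20 * d + 3) * (2 * ((n + n) * d) + 1) < n * n := by
    have h1 : 20 * d + 3 ≤ 23 * d := by omega
    have h2 : 2 * ((n + n) * d) + 1 ≤ 5 * (n * d) := by
      have : 2 * ((n + n) * d) = 4 * (n * d) := by ring
      omega
    calc (20 * d + 3) * (2 * ((n + n) * d) + 1)
        ≤ (23 * d) * (5 * (n * d)) := Nat.mul_le_mul h1 h2
      _ = 115 * (d * d) * n := by ring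
      _ < 128 * 2 ^ (2 * d) * n := by
          have h3 : 115 * (d * d) < 128 * 2 ^ (2 * d) := by
            have h4 : 115 * (d * d) < 115 * 2 ^ (2 * d) :=
              Nat.mul_lt_mul_of_le_of_lt (le_refl 115) hdd (by norm_num)
            have h5 : 115 * 2 ^ (2 * d) ≤ 128 * 2 ^ (2 * d) :=
              Nat.mul_le_mul_right _ (by norm_num)
            omega
          exact Nat.mul_lt_mul_of_lt_of_le h3 (le_refl n) hn1
      _ = 2 ^ (2 * d + 7) * n := by rw [pow_add]; ring
      _ ≤ 2 ^ (10 * d) * n := by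
          have : 2 ^ (2 * d + 7) ≤ 2 ^ (10 * d) := Nat.pow_le_pow_right (by norm_num) (by omega)
          exact Nat.mul_le_mul_right n this
      _ = n * n := by rw [hn]
  calc ((n + n) * (n + n) + 2) ^ (2 * ((n + n) * d) + 1)
      ≤ (2 ^ (20 * d + 3)) ^ (2 * ((n + n) * d) + 1) := Nat.pow_le_pow_left hbase _
    _ = 2 ^ ((20 * d + 3) * (2 * ((n + n) * d) + 1)) := by rw [← pow_mul]
    _ < 2 ^ (n * n) := Nat.pow_lt_pow_right (by norm_num) hexp

/-- Local dimension is unbounded on the class of finite posets of height 2. -/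
theorem localDim_unbounded_height_two (d : ℕ) (hd : 1 ≤ d) :
    ∃ (α : Type) (_ : Fintype α) (inst : PartialOrder α),
      (∀ x y z : α, inst.lt x y → inst.lt y z → False) ∧ d ≤ @localDim α inst := by
  obtain ⟨B, hB⟩ := key_counting (2 ^ (10 * d)) d (by positivity)
    (by
      simp only [Fintype.card_prod, Fintype.card_sum, Fintype.card_fin]
      exact numeric d hd)
  exact ⟨Fin (2 ^ (10 * d)) ⊕ Fin (2 ^ (10 * d)), inferInstance, bpo B, bpo_height' B, hB⟩
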